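/- Let K ≥ 4 be an even integer and let Q_K be the square 2^K-ary QAM constellation. Set X = {1, −1, i, −i} and Y = {(4m−2^{K/2}+3) + (2^{K/2}−1−4n)·i : m, n ∈ ℤ, 0 ≤ m, n ≤ 2^{(K−2)/2}−1}. Then (X, Y) is a uniquely factorable constellation pair, {y/x : x ∈ X, y ∈ Y} = Q_K, and the minimum of |y − y'| over all distinct y, y' ∈ Y equals 4. -/

import Mathlib

/-- A pair `(X, Y)` of sets of complex numbers is a uniquely factorable
constellation pair (UFCP) if `x * y' = x' * y` with `x, x' ∈ X` and
`y, y' ∈ Y` implies `x = x'` and `y = y'`. -/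
def IsUFCP (X Y : Set ℂ) : Prop :=
  ∀ x ∈ X, ∀ x' ∈ X, ∀ y ∈ Y, ∀ y' ∈ Y, x * y' = x' * y → x = x' ∧ y = y'

/-- The square `2^K`-ary QAM constellation (for even `K ≥ 2`). -/
def sqQAM (K : ℕ) : Set ℂ :=
  {z | ∃ m n : ℤ, -(2 : ℤ) ^ ((K - 2) / 2) + 1 ≤ m ∧ m ≤ (2 : ℤ) ^ ((K - 2) / 2) ∧
    -(2 : ℤ) ^ ((K - 2) / 2) + 1 ≤ n ∧ n ≤ (2 : ℤ) ^ ((K - 2) / 2) ∧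
    z = (2 * (m : ℂ) - 1) + (2 * (n : ℂ) - 1) * Complex.I}

/-- The every-other-point sub-constellation of the square `2^K`-ary QAM
constellation along horizontal and vertical lines, for even `K ≥ 4`. -/
def hvY (K : ℕ) : Set ℂ :=
  {z | ∃ m n : ℤ, 0 ≤ m ∧ m ≤ (2 : ℤ) ^ ((K - 2) / 2) - 1 ∧
      0 ≤ n ∧ n ≤ (2 : ℤ) ^ ((K - 2) / 2) - 1 ∧
      z = (4 * (m : ℂ) - (2 : ℂ) ^ (K / 2) + 3) +
          ((2 : ℂ) ^ (K / 2) - 1 - 4 * (n : ℂ)) * Complex.I}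

private lemma int_pair_eq (A B C D : ℤ) (h : ((A:ℂ) + B*Complex.I) = (C:ℂ) + D*Complex.I) :
    A = C ∧ B = D := by
  have h1 := congrArg Complex.re h
  have h2 := congrArg Complex.im h
  simp at h1 h2
  exact ⟨by exact_mod_cast h1, by exact_mod_cast h2⟩

private lemma rot_ne (A B C D : ℤ) (hA : A % 4 = 3) (hB : B % 4 = 3) (hC : C % 4 = 3)
    (hD : D % 4 = 3) (u : ℂ) (hu : u = -1 ∨ u = Complex.I ∨ u = -Complex.I) :
    ((A:ℂ) + B*Complex.I) ≠ u * ((C:ℂ) + D*Complex.I) := by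
  rcases hu with rfl | rfl | rfl <;> intro h
  · have := int_pair_eq A B (-C) (-D) (by push_cast; linear_combination h)
    omega
  · have := int_pair_eq A B (-D) C (by push_cast; linear_combination h + (D:ℂ) * Complex.I_sq)
    omega
  · have := int_pair_eq A B D (-C) (by push_cast; linear_combination h - (D:ℂ) * Complex.I_sq)
    omega

private lemma mem_hvY (t : ℕ) (z : ℂ) : z ∈ hvY (2*t+4) ↔
    ∃ m n : ℤ, 0 ≤ m ∧ m ≤ 2^(t+1) - 1 ∧ 0 ≤ n ∧ n ≤ 2^(t+1) - 1 ∧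
      z = ((4*m - 2*2^(t+1) + 3 : ℤ):ℂ) + ((2*2^(t+1) - 1 - 4*n : ℤ):ℂ)*Complex.I := by
  have h1 : (2*t+4-2)/2 = t+1 := by omega
  have h2 : (2*t+4)/2 = t+2 := by omega
  simp only [hvY, Set.mem_setOf_eq, h1, h2]
  refine exists_congr fun m => exists_congr fun n => ?_
  constructor <;> rintro ⟨a, b, c, d, e⟩ <;> exact ⟨a, b, c, d, by rw [e]; push_cast; ring⟩

private lemma mem_sqQAM (t : ℕ) (z : ℂ) : z ∈ sqQAM (2*t+4) ↔
    ∃ m n : ℤ, -(2^(t+1)) + 1 ≤ m ∧ m ≤ 2^(t+1) ∧ -(2^(t+1)) + 1 ≤ n ∧ n ≤ 2^(t+1) ∧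
      z = ((2*m - 1 : ℤ):ℂ) + ((2*n - 1 : ℤ):ℂ)*Complex.I := by
  have h1 : (2*t+4-2)/2 = t+1 := by omega
  simp only [sqQAM, Set.mem_setOf_eq, h1]
  refine exists_congr fun m => exists_congr fun n => ?_
  constructor <;> rintro ⟨a, b, c, d, e⟩ <;> exact ⟨a, b, c, d, by rw [e]; push_cast; ring⟩

/-- With `X = {1, -1, i, -i}` and `Y = hvY K`, `(X, Y)` is a UFCP factorizing
the square `2^K`-ary QAM constellation, and the minimum distance between
distinct points of `Y` is `4`. -/
theorem ufcp_sqQAM_four (K : ℕ) (hK4 : 4 ≤ K) (hKeven : K % 2 = 0) :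
    IsUFCP ({1, -1, Complex.I, -Complex.I} : Set ℂ) (hvY K) ∧
    {w : ℂ | ∃ x ∈ ({1, -1, Complex.I, -Complex.I} : Set ℂ),
        ∃ y ∈ hvY K, w = y / x} = sqQAM K ∧
    (∀ y ∈ hvY K, ∀ y' ∈ hvY K, y ≠ y' → (4 : ℝ) ≤ ‖y - y'‖) ∧
    (∃ y ∈ hvY K, ∃ y' ∈ hvY K, y ≠ y' ∧ ‖y - y'‖ = 4) := by
  obtain ⟨t, rfl⟩ : ∃ t, K = 2*t + 4 := ⟨(K-4)/2, by omega⟩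
  have hMe : (2:ℤ)^(t+1) % 2 = 0 := by
    have : (2:ℤ)^(t+1) = 2*2^t := by ring
    omega
  have hM2 : 2 ≤ (2:ℤ)^(t+1) := by
    calc (2:ℤ) = 2^1 := by norm_num
    _ ≤ 2^(t+1) := pow_le_pow_right₀ (by norm_num) (by omega)
  refine ⟨?_, ?_, ?_, ?_⟩
  · -- Part 1 : UFCP
    intro x hx x' hx' y hy y' hy' h
    rw [mem_hvY] at hy hy'
    obtain ⟨m, n, hm0, hm1, hn0, hn1, hyeq⟩ := hy
    obtain ⟨m', n', hm0', hm1', hn0', hn1', hyeq'⟩ := hy'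
    simp only [Set.mem_insert_iff, Set.mem_singleton_iff] at hx hx'
    have hxx : (starRingEnd ℂ) x * x = 1 := by
      rcases hx with rfl|rfl|rfl|rfl <;>
        simp [Complex.conj_I, Complex.I_mul_I]
    have h' : y' = ((starRingEnd ℂ) x * x') * y := by
      calc y' = ((starRingEnd ℂ) x * x) * y' := by rw [hxx, one_mul]
      _ = (starRingEnd ℂ) x * (x * y') := by ring
      _ = (starRingEnd ℂ) x * (x' * y) := by rw [h]
      _ = _ := by ring
    have hu4 : (starRingEnd ℂ) x * x' = 1 ∨ ((starRingEnd ℂ) x * x' = -1 ∨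
        (starRingEnd ℂ) x * x' = Complex.I ∨ (starRingEnd ℂ) x * x' = -Complex.I) := by
      rcases hx with rfl|rfl|rfl|rfl <;> rcases hx' with rfl|rfl|rfl|rfl <;>
        simp [Complex.conj_I, Complex.I_mul_I] <;> tauto
    rcases hu4 with hu | hu
    · have hxeq : x' = x := by
        calc x' = ((starRingEnd ℂ) x * x) * x' := by rw [hxx, one_mul]
        _ = x * ((starRingEnd ℂ) x * x') := by ring
        _ = x := by rw [hu, mul_one]
      rw [hu, one_mul] at h'
      exact ⟨hxeq.symm, h'.symm⟩
    · exfalso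
      rw [hyeq', hyeq] at h'
      exact rot_ne _ _ _ _ (by omega) (by omega) (by omega) (by omega) _ hu h'
  · -- Part 2 : factorization
    ext z
    simp only [Set.mem_setOf_eq]
    constructor
    · rintro ⟨x, hx, y, hy, rfl⟩
      rw [mem_hvY] at hy
      obtain ⟨m, n, hm0, hm1, hn0, hn1, rfl⟩ := hy
      rw [mem_sqQAM]
      simp only [Set.mem_insert_iff, Set.mem_singleton_iff] at hx
      rcases hx with rfl | rfl | rfl | rfl
      · exact ⟨2*m - 2^(t+1) + 2, 2^(t+1) - 2*n, by omega, by omega, by omega, by omega,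
          by rw [div_one]; push_cast; ring⟩
      · refine ⟨2^(t+1) - 1 - 2*m, 1 - 2^(t+1) + 2*n, by omega, by omega, by omega, by omega, ?_⟩
        rw [div_eq_iff (by norm_num : (-1:ℂ) ≠ 0)]; push_cast; ring
      · refine ⟨2^(t+1) - 2*n, 2^(t+1) - 1 - 2*m, by omega, by omega, by omega, by omega, ?_⟩
        rw [div_eq_iff Complex.I_ne_zero]; push_cast
        linear_combination (4*(m:ℂ) - 2*2^(t+1) + 3) * Complex.I_sq
      · refine ⟨1 - 2^(t+1) + 2*n, 2*m - 2^(t+1) + 2, by omega, by omega, by omega, by omega, ?_⟩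
        rw [div_eq_iff (by simpa using Complex.I_ne_zero : (-Complex.I) ≠ 0)]; push_cast
        linear_combination (4*(m:ℂ) - 2*2^(t+1) + 3) * Complex.I_sq
    · rw [mem_sqQAM]
      rintro ⟨m, n, hm0, hm1, hn0, hn1, rfl⟩
      have hm2 := Int.emod_two_eq m
      have hn2 := Int.emod_two_eq n
      rcases (by omega : m % 2 = 0 ∧ n % 2 = 0 ∨ m % 2 = 1 ∧ n % 2 = 1 ∨
          m % 2 = 0 ∧ n % 2 = 1 ∨ m % 2 = 1 ∧ n % 2 = 0) with ⟨hm, hn⟩ | ⟨hm, hn⟩ | ⟨hm, hn⟩ | ⟨hm, hn⟩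
      · -- x = 1
        obtain ⟨p, hp⟩ : ∃ p, m = 2*p - 2^(t+1) + 2 := ⟨(m + 2^(t+1) - 2)/2, by omega⟩
        obtain ⟨q, hq⟩ : ∃ q, n = 2^(t+1) - 2*q := ⟨(2^(t+1) - n)/2, by omega⟩
        refine ⟨1, by simp, _, (mem_hvY t _).2 ⟨p, q, by omega, by omega, by omega, by omega, rfl⟩, ?_⟩
        rw [div_one, hp, hq]; push_cast; ring
      · -- x = -1
        obtain ⟨p, hp⟩ : ∃ p, m = 2^(t+1) - 1 - 2*p := ⟨(2^(t+1) - 1 - m)/2, by omega⟩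
        obtain ⟨q, hq⟩ : ∃ q, n = 1 - 2^(t+1) + 2*q := ⟨(n - 1 + 2^(t+1))/2, by omega⟩
        refine ⟨-1, by simp, _, (mem_hvY t _).2 ⟨p, q, by omega, by omega, by omega, by omega, rfl⟩, ?_⟩
        rw [eq_div_iff (by norm_num : (-1:ℂ) ≠ 0), hp, hq]; push_cast; ring
      · -- x = I  (m even, n odd)
        obtain ⟨p, hp⟩ : ∃ p, n = 2^(t+1) - 1 - 2*p := ⟨(2^(t+1) - 1 - n)/2, by omega⟩
        obtain ⟨q, hq⟩ : ∃ q, m = 2^(t+1) - 2*q := ⟨(2^(t+1) - m)/2, by omega⟩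
        refine ⟨Complex.I, by simp, _, (mem_hvY t _).2 ⟨p, q, by omega, by omega, by omega, by omega, rfl⟩, ?_⟩
        rw [eq_div_iff Complex.I_ne_zero, hp, hq]; push_cast
        linear_combination (2*(2:ℂ)^(t+1) - 3 - 4*(p:ℂ)) * Complex.I_sq
      · -- x = -I  (m odd, n even)
        obtain ⟨p, hp⟩ : ∃ p, n = 2*p - 2^(t+1) + 2 := ⟨(n + 2^(t+1) - 2)/2, by omega⟩
        obtain ⟨q, hq⟩ : ∃ q, m = 1 - 2^(t+1) + 2*q := ⟨(m - 1 + 2^(t+1))/2, by omega⟩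
        refine ⟨-Complex.I, by simp, _, (mem_hvY t _).2 ⟨p, q, by omega, by omega, by omega, by omega, rfl⟩, ?_⟩
        rw [eq_div_iff (by simpa using Complex.I_ne_zero : (-Complex.I) ≠ 0), hp, hq]; push_cast
        linear_combination (2*(2:ℂ)^(t+1) - 3 - 4*(p:ℂ)) * Complex.I_sq
  · -- Part 3 : minimum distance at least 4
    intro y hy y' hy' hne
    rw [mem_hvY] at hy hy'
    obtain ⟨m, n, hm0, hm1, hn0, hn1, hyeq⟩ := hy
    obtain ⟨m', n', hm0', hm1', hn0', hn1', hyeq'⟩ := hy'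
    have hd : y - y' = (((4*(m-m') : ℤ):ℝ):ℂ) + (((4*(n'-n):ℤ):ℝ):ℂ)*Complex.I := by
      rw [hyeq, hyeq']; push_cast; ring
    have hsq : (‖y-y'‖)^2 = ((4*(m-m'):ℤ):ℝ)^2 + ((4*(n'-n):ℤ):ℝ)^2 := by
      rw [hd, Complex.sq_norm, Complex.normSq_add_mul_I]
    have hmn : m ≠ m' ∨ n ≠ n' := by
      by_contra hc
      push_neg at hc
      exact hne (by rw [hyeq, hyeq', hc.1, hc.2])
    have h16 : (16:ℝ) ≤ (‖y-y'‖)^2 := by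
      rw [hsq]
      have : (16:ℤ) ≤ (4*(m-m'))^2 + (4*(n'-n))^2 := by
        rcases hmn with hk | hk
        · rcases (by omega : m - m' ≤ -1 ∨ 1 ≤ m - m') with hk' | hk' <;>
            nlinarith [sq_nonneg (4*(n'-n))]
        · rcases (by omega : n' - n ≤ -1 ∨ 1 ≤ n' - n) with hk' | hk' <;>
            nlinarith [sq_nonneg (4*(m-m'))]
      exact_mod_cast this
    nlinarith [norm_nonneg (y - y'), h16]
  · -- Part 4 : distance 4 achieved
    refine ⟨((3 - 2*2^(t+1) : ℤ):ℂ) + ((2*2^(t+1)-1:ℤ):ℂ)*Complex.I,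
      (mem_hvY t _).2 ⟨0, 0, by omega, by omega, by omega, by omega, by push_cast; ring⟩,
      ((7 - 2*2^(t+1) : ℤ):ℂ) + ((2*2^(t+1)-1:ℤ):ℂ)*Complex.I,
      (mem_hvY t _).2 ⟨1, 0, by omega, by omega, by omega, by omega, by push_cast; ring⟩,
      ?_, ?_⟩
    · intro h
      have := int_pair_eq _ _ _ _ h
      omega
    · have hdd : ((3 - 2*2^(t+1) : ℤ):ℂ) + ((2*2^(t+1)-1:ℤ):ℂ)*Complex.I -
          (((7 - 2*2^(t+1) : ℤ):ℂ) + ((2*2^(t+1)-1:ℤ):ℂ)*Complex.I) = ((-4:ℝ):ℂ) := by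
        push_cast; ring
      rw [hdd, Complex.norm_real]
      norm_num
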